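/- Let L be a simple thin Lie algebra over GF(2) of dimension 2^n − 1, and let α ∈ Φ be a root such that ad(e_α) is not nilpotent, with characteristic polynomial t^r(t+1)^{2s}, s > 0. Then there exist roots β and α+β such that the subalgebra spanned by e_α, e_β, e_{α+β} is isomorphic to fsl_2 (i.e., [e_α,e_β] = e_{α+β}, [e_β,e_{α+β}] = e_α, [e_{α+β},e_α] = e_β). -/

import Mathlib

open Polynomial

/-- Let `L` be a simple thin Lie algebra over `GF(2)` of dimension
`2^n - 1` and `α` a root with `ad (e α)` having characteristic polynomial
`t^r (t+1)^(2s)`, `s > 0`.  Then there is a root `β` such that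
`e α, e β, e (α+β)` span a copy of `fsl₂`. -/
theorem thin_simple_fsl2_subalgebra {n : ℕ} {L : Type*}
    [LieRing L] [LieAlgebra (ZMod 2) L] [LieAlgebra.IsSimple (ZMod 2) L]
    [Module.Finite (ZMod 2) L]
    (b : Module.Basis {v : Fin n → ZMod 2 // v ≠ 0} (ZMod 2) L)
    (e : (Fin n → ZMod 2) → L)
    (he : ∀ (v : Fin n → ZMod 2) (hv : v ≠ 0), e v = b ⟨v, hv⟩)
    (he0 : e 0 = 0)
    (hbr : ∀ α β : Fin n → ZMod 2, ⁅e α, e β⁆ = 0 ∨ ⁅e α, e β⁆ = e (α + β))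
    (α : Fin n → ZMod 2) (hα : α ≠ 0) (r s : ℕ) (hs : 0 < s)
    (hchar : LinearMap.charpoly (LieAlgebra.ad (ZMod 2) L (e α)) =
      Polynomial.X ^ r * (Polynomial.X + 1) ^ (2 * s)) :
    ∃ β : Fin n → ZMod 2, β ≠ 0 ∧ α + β ≠ 0 ∧
      ⁅e α, e β⁆ = e (α + β) ∧ ⁅e β, e (α + β)⁆ = e α ∧ ⁅e (α + β), e α⁆ = e β := by
  classical
  by_contra hcon
  -- characteristic two facts
  have hL2 : ∀ z : L, z + z = 0 := by
    intro z
    have h2 : ((1 : ZMod 2) + 1) = 0 := rfl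
    have hz : z + z = ((1 : ZMod 2) + 1) • z := by rw [add_smul, one_smul]
    rw [hz, h2, zero_smul]
  have hneg : ∀ z : L, -z = z := fun z => neg_eq_of_add_eq_zero_left (hL2 z)
  have hV2 : ∀ v : Fin n → ZMod 2, v + v = 0 := by
    intro v; funext i
    have h2 : ((1 : ZMod 2) + 1) = 0 := rfl
    have hz : v i + v i = ((1 : ZMod 2) + 1) * v i := by ring
    show v i + v i = 0
    rw [hz, h2, zero_mul]
  have hcancel : ∀ v w : Fin n → ZMod 2, v + (v + w) = w := by
    intro v w; rw [← add_assoc, hV2, zero_add]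
  have hene : ∀ v : Fin n → ZMod 2, v ≠ 0 → e v ≠ 0 := by
    intro v hv; rw [he v hv]; exact b.ne_zero _
  set f := LieAlgebra.ad (ZMod 2) L (e α) with hfdef
  have hfap : ∀ z : L, f z = ⁅e α, z⁆ := fun z => rfl
  -- the set of "swap" roots
  set S : Set (Fin n → ZMod 2) :=
    {β | β ≠ 0 ∧ α + β ≠ 0 ∧ ⁅e α, e β⁆ = e (α + β) ∧ ⁅e α, e (α + β)⁆ = e β} with hSdef
  have hS_f2 : ∀ β ∈ S, f (f (e β)) = e β := by
    intro β hβ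
    rw [hfap, hfap, hβ.2.2.1, hβ.2.2.2]
  have hNS_f2 : ∀ β, β ∉ S → f (f (e β)) = 0 := by
    intro β hβ
    by_cases hβ0 : β = 0
    · simp [hβ0, he0, hfap]
    rcases hbr α β with h1 | h1
    · rw [hfap, hfap, h1]; simp
    by_cases hαβ0 : α + β = 0
    · rw [hfap, hfap, h1, hαβ0, he0]; simp
    rcases hbr α (α + β) with h2 | h2
    · rw [hfap, hfap, h1, h2]
    exact absurd ⟨hβ0, hαβ0, h1, by rwa [hcancel] at h2⟩ hβ
  have hmem_S : ∀ γ, γ ≠ 0 → f (f (e γ)) = e γ → γ ∈ S := by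
    intro γ hγ0 h2
    have heγ : e γ ≠ 0 := hene γ hγ0
    rcases hbr α γ with h1 | h1
    · rw [hfap, hfap, h1] at h2; simp at h2; exact absurd h2.symm heγ
    by_cases hαγ : α + γ = 0
    · rw [hfap, hfap, h1, hαγ, he0] at h2; simp at h2; exact absurd h2.symm heγ
    refine ⟨hγ0, hαγ, h1, ?_⟩
    rw [hfap, hfap, h1] at h2
    exact h2
  -- Step 1: S is nonempty
  obtain ⟨β₀, hβ₀⟩ : ∃ β, β ∈ S := by
    by_contra hS
    push_neg at hS
    have hnil : IsNilpotent f := by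
      refine ⟨2, ?_⟩
      apply b.ext
      intro i
      rw [← he i.1 i.2]
      show f (f (e i.1)) = 0
      exact hNS_f2 i.1 (hS i.1)
    have := hnil.charpoly_eq_X_pow_finrank
    rw [hchar] at this
    have h1 := congrArg (Polynomial.eval (1 : ZMod 2)) this
    simp only [eval_mul, eval_pow, eval_X, eval_add, eval_one, one_pow, one_mul] at h1
    have h2 : ((1 : ZMod 2) + 1) = 0 := rfl
    rw [h2, zero_pow (by omega : 2 * s ≠ 0)] at h1
    exact zero_ne_one h1
  -- Step 2: negation forces all inner brackets to vanish
  have hzero : ∀ β ∈ S, ⁅e β, e (α + β)⁆ = 0 := by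
    intro β hβ
    rcases hbr β (α + β) with h | h
    · exact h
    exfalso
    have hba : β + (α + β) = α := by
      rw [add_comm α β, ← add_assoc, hV2, zero_add]
    rw [hba] at h
    refine hcon ⟨β, hβ.1, hβ.2.1, hβ.2.2.1, h, ?_⟩
    rw [← lie_skew, hβ.2.2.2, hneg]
  -- f∘f is a derivation (char 2)
  have hf2der : ∀ u v : L, f (f ⁅u, v⁆) = ⁅f (f u), v⁆ + ⁅u, f (f v)⁆ := by
    intro u v
    have h1 : ∀ x y : L, f ⁅x, y⁆ = ⁅f x, y⁆ + ⁅x, f y⁆ := by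
      intro x y; rw [hfap, hfap, hfap, leibniz_lie]
    rw [h1, map_add, h1, h1]
    have : ∀ a c d : L, a + c + (c + d) = a + d := by
      intro a c d
      have hc := hL2 c
      have : a + c + (c + d) = a + (c + c) + d := by abel
      rw [this, hc, add_zero]
    exact this _ _ _
  -- the span
  set G : Set L := (e '' S) ∪ {z | ∃ β ∈ S, ∃ δ ∈ S, z = ⁅e β, e δ⁆} with hGdef
  set W : Submodule (ZMod 2) L := Submodule.span (ZMod 2) G with hWdef
  have hA : ∀ γ β, β ∈ S → ⁅e γ, e β⁆ ∈ W := by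
    intro γ β hβ
    by_cases hγ : γ ∈ S
    · exact Submodule.subset_span (Or.inr ⟨γ, hγ, β, hβ, rfl⟩)
    rcases hbr γ β with h | h
    · rw [h]; exact W.zero_mem
    rw [h]
    by_cases hγβ : γ + β = 0
    · rw [hγβ, he0]; exact W.zero_mem
    have h2 : f (f (e (γ + β))) = e (γ + β) := by
      rw [← h, hf2der, hNS_f2 γ hγ, hS_f2 β hβ, zero_lie, zero_add, h]
    exact Submodule.subset_span (Or.inl ⟨γ + β, hmem_S _ hγβ h2, rfl⟩)
  have hterm : ∀ μ ν δ, ν ∈ S → δ ∈ S → ⁅⁅e μ, e ν⁆, e δ⁆ ∈ W := by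
    intro μ ν δ hν hδ
    rcases hbr μ ν with h | h
    · rw [h, zero_lie]; exact W.zero_mem
    rw [h]
    exact hA _ _ hδ
  have hGenB : ∀ γ, ∀ g ∈ G, ⁅e γ, g⁆ ∈ W := by
    intro γ g hg
    rcases hg with ⟨β, hβ, rfl⟩ | ⟨β, hβ, δ, hδ, rfl⟩
    · exact hA γ β hβ
    rw [leibniz_lie]
    refine W.add_mem (hterm γ β δ hβ hδ) ?_
    have : ⁅e β, ⁅e γ, e δ⁆⁆ = ⁅⁅e γ, e δ⁆, e β⁆ := by
      rw [← lie_skew, hneg]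
    rw [this]
    exact hterm γ δ β hδ hβ
  have hlie : ∀ (x : L), ∀ m ∈ W, ⁅x, m⁆ ∈ W := by
    have hgen2 : ∀ (x : L), ∀ g ∈ G, ⁅x, g⁆ ∈ W := by
      intro x g hg
      have hx : x ∈ Submodule.span (ZMod 2) (Set.range b) := by
        rw [b.span_eq]; trivial
      induction hx using Submodule.span_induction with
      | mem y hy =>
        obtain ⟨i, rfl⟩ := hy
        rw [← he i.1 i.2]
        exact hGenB i.1 g hg
      | zero => rw [zero_lie]; exact W.zero_mem
      | add y z _ _ hy hz => rw [add_lie]; exact W.add_mem hy hz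
      | smul c y _ hy => rw [smul_lie]; exact W.smul_mem c hy
    intro x m hm
    induction hm using Submodule.span_induction with
    | mem g hg => exact hgen2 x g hg
    | zero => rw [lie_zero]; exact W.zero_mem
    | add y z _ _ hy hz => rw [lie_add]; exact W.add_mem hy hz
    | smul c y _ hy => rw [lie_smul]; exact W.smul_mem c hy
  set I : LieIdeal (ZMod 2) L := { W with lie_mem := fun {x m} hm => hlie x m hm } with hIdef
  have hImem : ∀ z, z ∈ I ↔ z ∈ W := fun z => Iff.rfl
  have hIne : I ≠ ⊥ := by
    intro hbot
    have : e β₀ ∈ I := Submodule.subset_span (Or.inl ⟨β₀, hβ₀, rfl⟩)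
    rw [hbot] at this
    exact hene β₀ hβ₀.1 ((LieSubmodule.mem_bot _).mp this)
  have hItop : I = ⊤ := (LieAlgebra.IsSimple.eq_bot_or_eq_top I).resolve_left hIne
  have heαW : e α ∈ W := by
    have : e α ∈ I := by rw [hItop]; trivial
    exact this
  -- the coordinate functional kills W
  have hφ : ∀ g ∈ G, b.coord ⟨α, hα⟩ g = 0 := by
    intro g hg
    rcases hg with ⟨β, hβ, rfl⟩ | ⟨β, hβ, δ, hδ, rfl⟩
    · have hβα : β ≠ α := by
        intro hh
        apply hβ.2.1
        rw [hh, hV2]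
      rw [he β hβ.1, Module.Basis.coord_apply, Module.Basis.repr_self,
        Finsupp.single_apply_eq_zero]
      intro hc
      exact absurd (congrArg Subtype.val hc).symm hβα
    rcases hbr β δ with h | h
    · rw [h, map_zero]
    rw [h]
    by_cases h0 : β + δ = 0
    · rw [h0, he0, map_zero]
    have hβδα : β + δ ≠ α := by
      intro hh
      have hδval : δ = α + β := by
        rw [← hh, add_comm β δ, add_assoc, hV2, add_zero]
      have hz := hzero β hβ
      rw [hδval, hz] at h
      have hba : β + (α + β) = α := by rw [add_comm α β, hcancel]
      rw [hba] at h
      exact hene α hα h.symm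
    rw [he _ h0, Module.Basis.coord_apply, Module.Basis.repr_self, Finsupp.single_apply_eq_zero]
    intro hc
    exact absurd (congrArg Subtype.val hc) (Ne.symm hβδα)
  have hWker : W ≤ LinearMap.ker (b.coord ⟨α, hα⟩) := by
    rw [hWdef, Submodule.span_le]
    intro g hg
    exact hφ g hg
  have := hWker heαW
  rw [LinearMap.mem_ker, Module.Basis.coord_apply, he α hα, Module.Basis.repr_self] at this
  simp at this
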